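/- Let c = (c_1, …, c_n) ∈ ℝ^n have positive entries arranged in descending order, c_1 ≥ c_2 ≥ … ≥ c_n > 0, with c_1 ≥ 1, and let ‖·‖_c be the c-norm on B(H). Then there exist nonzero A, B ∈ B(H) with ‖AB‖_c = ‖A‖_c · ‖B‖_c if and only if c_1 = 1. -/

import Mathlib

set_option linter.unusedSectionVars false
set_option linter.unusedVariables false


open scoped InnerProductSpace

variable {H : Type*} [NormedAddCommGroup H] [InnerProductSpace ℂ H] [CompleteSpace H]

/-- The `k`-th singular value (1-indexed) of a bounded operator `A`:
`s_k(A) = inf {‖A - X‖ : rank X < k}`. -/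
noncomputable def sval (k : ℕ) (A : H →L[ℂ] H) : ℝ :=
  sInf { r : ℝ | ∃ X : H →L[ℂ] H,
    Module.rank ℂ (LinearMap.range (X : H →ₗ[ℂ] H)) < (k : Cardinal) ∧ r = ‖A - X‖ }

lemma svalSet_bddBelow (k : ℕ) (A : H →L[ℂ] H) :
    BddBelow { r : ℝ | ∃ X : H →L[ℂ] H,
      Module.rank ℂ (LinearMap.range (X : H →ₗ[ℂ] H)) < (k : Cardinal) ∧ r = ‖A - X‖ } :=
  ⟨0, by rintro r ⟨X, -, rfl⟩; positivity⟩

lemma sval_nonneg (k : ℕ) (A : H →L[ℂ] H) : 0 ≤ sval k A :=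
  Real.sInf_nonneg (by rintro r ⟨X, -, rfl⟩; positivity)

lemma zero_mem_svalSet (k : ℕ) (hk : 1 ≤ k) (A : H →L[ℂ] H) :
    ‖A‖ ∈ { r : ℝ | ∃ X : H →L[ℂ] H,
      Module.rank ℂ (LinearMap.range (X : H →ₗ[ℂ] H)) < (k : Cardinal) ∧ r = ‖A - X‖ } := by
  refine ⟨0, ?_, by simp⟩
  have h0 : Module.rank ℂ (LinearMap.range ((0 : H →L[ℂ] H) : H →ₗ[ℂ] H)) = 0 := by simp
  rw [h0]
  exact_mod_cast Nat.lt_of_lt_of_le Nat.zero_lt_one hk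

lemma sval_one (A : H →L[ℂ] H) : sval 1 A = ‖A‖ := by
  have : { r : ℝ | ∃ X : H →L[ℂ] H,
      Module.rank ℂ (LinearMap.range (X : H →ₗ[ℂ] H)) < ((1:ℕ) : Cardinal) ∧ r = ‖A - X‖ }
      = {‖A‖} := by
    ext r
    constructor
    · rintro ⟨X, hX, rfl⟩
      have h0 : Module.rank ℂ (LinearMap.range (X : H →ₗ[ℂ] H)) = 0 :=
        Cardinal.lt_one_iff_zero.mp (by exact_mod_cast hX)
      have hbot : LinearMap.range (X : H →ₗ[ℂ] H) = ⊥ := Submodule.rank_eq_zero.mp h0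
      have hX0 : X = 0 := ContinuousLinearMap.coe_injective
        ((LinearMap.range_eq_bot.mp hbot).trans rfl)
      simp [hX0]
    · rintro rfl
      exact zero_mem_svalSet 1 le_rfl A
  rw [sval, this, csInf_singleton]

lemma sval_le_norm_sub (k : ℕ) (A X : H →L[ℂ] H)
    (hX : Module.rank ℂ (LinearMap.range (X : H →ₗ[ℂ] H)) < (k : Cardinal)) :
    sval k A ≤ ‖A - X‖ :=
  csInf_le (svalSet_bddBelow k A) ⟨X, hX, rfl⟩

lemma sval_comp_le (k : ℕ) (hk : 1 ≤ k) (A B : H →L[ℂ] H) :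
    sval k (A ∘L B) ≤ ‖A‖ * sval k B := by
  rcases eq_or_lt_of_le (norm_nonneg A) with hA | hA
  · have hA0 : A = 0 := by rwa [eq_comm, norm_eq_zero] at hA
    have : sval k (A ∘L B) = 0 := by
      refine le_antisymm ?_ (sval_nonneg _ _)
      have := sval_le_norm_sub k (A ∘L B) 0 (by
        have h0 : Module.rank ℂ (LinearMap.range ((0 : H →L[ℂ] H) : H →ₗ[ℂ] H)) = 0 := by simp
        rw [h0]
        exact_mod_cast Nat.lt_of_lt_of_le Nat.zero_lt_one hk)
      simpa [hA0] using this
    rw [this, ← hA, zero_mul]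
  · rw [← div_le_iff₀' hA]
    refine le_csInf ⟨‖B‖, zero_mem_svalSet k hk B⟩ ?_
    rintro r ⟨X, hX, rfl⟩
    rw [div_le_iff₀' hA]
    have hrank : Module.rank ℂ (LinearMap.range ((A ∘L X : H →L[ℂ] H) : H →ₗ[ℂ] H))
        < (k : Cardinal) := by
      refine lt_of_le_of_lt ?_ hX
      have := LinearMap.rank_comp_le_right (X : H →ₗ[ℂ] H) (A : H →ₗ[ℂ] H)
      simp only [LinearMap.rank, ContinuousLinearMap.coe_comp] at this ⊢
      exact this
    calc sval k (A ∘L B) ≤ ‖A ∘L B - A ∘L X‖ := sval_le_norm_sub k _ _ hrank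
      _ = ‖A ∘L (B - X)‖ := by rw [ContinuousLinearMap.comp_sub]
      _ ≤ ‖A‖ * ‖B - X‖ := ContinuousLinearMap.opNorm_comp_le _ _

lemma sval_eq_zero_of_rank_lt (k : ℕ) (A : H →L[ℂ] H)
    (h : Module.rank ℂ (LinearMap.range (A : H →ₗ[ℂ] H)) < (k : Cardinal)) :
    sval k A = 0 := by
  refine le_antisymm ?_ (sval_nonneg _ _)
  simpa using sval_le_norm_sub k A A h

/-- `f : ℝ^n → ℝ` is a symmetric norm: a norm invariant under permutations of the
coordinates and under sign changes of the coordinates. -/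
structure IsSymmetricNorm (n : ℕ) (f : (Fin n → ℝ) → ℝ) : Prop where
  triangle : ∀ x y, f (x + y) ≤ f x + f y
  homog : ∀ (t : ℝ) (x), f (t • x) = |t| * f x
  definite : ∀ x, x ≠ 0 → 0 < f x
  perm_invariant : ∀ (σ : Equiv.Perm (Fin n)) (x), f (fun i => x (σ i)) = f x
  sign_invariant : ∀ (ε : Fin n → ℝ), (∀ i, ε i = 1 ∨ ε i = -1) →
    ∀ x, f (fun i => ε i * x i) = f x

/-- The unitarily invariant norm induced by a symmetric norm `f` on `ℝ^n`:
`‖A‖_f = f (s_1(A), …, s_n(A))`. -/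
noncomputable def normf (n : ℕ) (f : (Fin n → ℝ) → ℝ) (A : H →L[ℂ] H) : ℝ :=
  f (fun j : Fin n => sval (j.1 + 1) A)

/-- The `c`-norm `‖A‖_c = Σ_j c_j s_j(A)`. -/
noncomputable def cnorm (n : ℕ) (c : Fin n → ℝ) (A : H →L[ℂ] H) : ℝ :=
  ∑ j : Fin n, c j * sval (j.1 + 1) A

theorem stmt13 (n : ℕ) (hn : 0 < n) (hdim : (n : Cardinal) ≤ Module.rank ℂ H)
    (c : Fin n → ℝ) (hmono : ∀ i j : Fin n, i ≤ j → c j ≤ c i) (hpos : ∀ i, 0 < c i)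
    (hc1 : 1 ≤ c ⟨0, hn⟩) :
    (∃ A B : H →L[ℂ] H, A ≠ 0 ∧ B ≠ 0 ∧
        cnorm n c (A ∘L B) = cnorm n c A * cnorm n c B) ↔
      c ⟨0, hn⟩ = 1 := by
  have hterm_nonneg : ∀ (A : H →L[ℂ] H) (j : Fin n), 0 ≤ c j * sval (j.1 + 1) A :=
    fun A j => mul_nonneg (hpos j).le (sval_nonneg _ _)
  have hfirst : ∀ A : H →L[ℂ] H, c ⟨0, hn⟩ * ‖A‖ ≤ cnorm n c A := by
    intro A
    have := Finset.single_le_sum (f := fun j : Fin n => c j * sval (j.1 + 1) A)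
      (fun j _ => hterm_nonneg A j) (Finset.mem_univ ⟨0, hn⟩)
    simpa [cnorm, sval_one] using this
  constructor
  · rintro ⟨A, B, hA, hB, heq⟩
    have hAn : (0:ℝ) < ‖A‖ := norm_pos_iff.mpr hA
    have hBn : (0:ℝ) < ‖B‖ := norm_pos_iff.mpr hB
    have hcA : 0 < cnorm n c A :=
      lt_of_lt_of_le (mul_pos (lt_of_lt_of_le one_pos hc1) hAn) (hfirst A)
    have hcB : 0 < cnorm n c B :=
      lt_of_lt_of_le (mul_pos (lt_of_lt_of_le one_pos hc1) hBn) (hfirst B)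
    have hsub : cnorm n c (A ∘L B) ≤ ‖A‖ * cnorm n c B := by
      rw [cnorm, cnorm, Finset.mul_sum]
      refine Finset.sum_le_sum fun j _ => ?_
      have := sval_comp_le (j.1 + 1) (Nat.le_add_left 1 j.1) A B
      calc c j * sval (j.1 + 1) (A ∘L B) ≤ c j * (‖A‖ * sval (j.1 + 1) B) :=
            mul_le_mul_of_nonneg_left this (hpos j).le
        _ = ‖A‖ * (c j * sval (j.1 + 1) B) := by ring
    have h1 : cnorm n c A ≤ ‖A‖ := by
      have := heq ▸ hsub
      exact le_of_mul_le_mul_right this hcB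
    have h2 : c ⟨0, hn⟩ * ‖A‖ ≤ 1 * ‖A‖ := by
      rw [one_mul]; exact le_trans (hfirst A) h1
    exact le_antisymm (le_of_mul_le_mul_right h2 hAn) hc1
  · intro hc
    obtain ⟨x, hx⟩ : ∃ x : H, x ≠ 0 := by
      rw [← rank_pos_iff_exists_ne_zero (R := ℂ)]
      exact lt_of_lt_of_le (by exact_mod_cast hn) hdim
    set e : H := ‖x‖⁻¹ • x with he
    have hne : ‖e‖ = 1 := by
      rw [he, norm_smul, norm_inv, norm_norm]
      exact inv_mul_cancel₀ (norm_ne_zero_iff.mpr hx)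
    set P : H →L[ℂ] H := (innerSL ℂ e).smulRight e with hP
    have hPapply : ∀ y : H, P y = (⟪e, y⟫_ℂ) • e := fun y => rfl
    have hPe : P e = e := by
      rw [hPapply, @inner_self_eq_norm_sq_to_K ℂ, hne]
      simp
    have hPne : P ≠ 0 := by
      intro h
      apply hx
      have he0 : e = 0 := by rw [← hPe, h]; simp
      have : ‖e‖ = 0 := by rw [he0, norm_zero]
      rw [hne] at this; norm_num at this
    have hPP : P ∘L P = P := by
      ext y
      simp only [ContinuousLinearMap.comp_apply, hPapply, inner_smul_right]
      rw [@inner_self_eq_norm_sq_to_K ℂ, hne]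
      simp
    have hPnorm : ‖P‖ = 1 := by
      rw [hP, ContinuousLinearMap.norm_smulRight_apply, innerSL_apply_norm, hne, one_mul]
    have hrankP : Module.rank ℂ (LinearMap.range (P : H →ₗ[ℂ] H)) ≤ 1 := by
      have hsub : LinearMap.range (P : H →ₗ[ℂ] H) ≤ Submodule.span ℂ {e} := by
        rintro y ⟨z, rfl⟩
        exact Submodule.smul_mem _ _ (Submodule.mem_span_singleton_self e)
      refine le_trans (Submodule.rank_mono hsub) ?_
      simpa using rank_span_le (R := ℂ) ({e} : Set H)
    have hsvalP : ∀ j : Fin n, j ≠ ⟨0, hn⟩ → c j * sval (j.1 + 1) P = 0 := by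
      intro j hj
      have hj1 : 1 ≤ j.1 := by
        rcases Nat.eq_zero_or_pos j.1 with h | h
        · exact absurd (Fin.ext h) hj
        · exact h
      have : sval (j.1 + 1) P = 0 := by
        refine sval_eq_zero_of_rank_lt _ _ (lt_of_le_of_lt hrankP ?_)
        exact_mod_cast Nat.lt_add_of_pos_left hj1
      rw [this, mul_zero]
    have hcnormP : cnorm n c P = 1 := by
      rw [cnorm, Finset.sum_eq_single ⟨0, hn⟩ (fun j _ hj => hsvalP j hj)
        (fun h => absurd (Finset.mem_univ _) h)]
      simp [sval_one, hPnorm, hc]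
    exact ⟨P, P, hPne, hPne, by rw [hPP, hcnormP]; norm_num⟩
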